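/- Let n = 4 in the planar-face configuration, and suppose moreover that A_2 ≠ A_3, A_4 ≠ A_1, B_1 ≠ B_3, and the lines through A_2, A_3 and through A_4, A_1 are distinct and not parallel. Then χ(M) = ∏_{i=1}^4 (a_{i−1},v_i,w_i)/(a_i,v_i,w_i) = 1 (infinitesimal flexibility) if and only if the three lines through B_1 and B_3, through A_2 and A_3, and through A_4 and A_1 have a common point. -/

import Mathlib

open Matrix

/-- The scalar triple product `(a, b, c) = ⟨a, [b, c]⟩` in `ℝ³`. -/
noncomputable def tripleProd (a b c : Fin 3 → ℝ) : ℝ := a ⬝ᵥ crossProduct b c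

lemma stmt9_tripleProd_eq (a b c : Fin 3 → ℝ) :
    tripleProd a b c = a 0 * (b 1 * c 2 - b 2 * c 1) - a 1 * (b 0 * c 2 - b 2 * c 0)
      + a 2 * (b 0 * c 1 - b 1 * c 0) := by
  simp [tripleProd, cross_apply, dotProduct, Fin.sum_univ_three]
  ring

lemma stmt9_cramer3 (n x y z : Fin 3 → ℝ) :
    tripleProd n x y • z
      = tripleProd z x y • n + tripleProd n z y • x + tripleProd n x z • y := by
  funext i
  fin_cases i <;>
    simp [stmt9_tripleProd_eq, Pi.add_apply, Pi.smul_apply, smul_eq_mul] <;> ring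

lemma stmt9_decomp3 (n x y z : Fin 3 → ℝ) (hn : n ≠ 0) (hq : tripleProd n x y ≠ 0)
    (hx : n ⬝ᵥ x = 0) (hy : n ⬝ᵥ y = 0) (hz : n ⬝ᵥ z = 0) :
    ∃ c d : ℝ, z = c • x + d • y := by
  have hnn : n ⬝ᵥ n ≠ 0 := fun h => hn (dotProduct_self_eq_zero.mp h)
  have hc := stmt9_cramer3 n x y z
  have h1 := congrArg (fun u => n ⬝ᵥ u) hc
  simp only [dotProduct_smul, dotProduct_add, smul_eq_mul] at h1
  rw [hz, hx, hy] at h1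
  have h0 : tripleProd z x y * (n ⬝ᵥ n) = 0 := by linarith
  have hzxy : tripleProd z x y = 0 := by
    rcases mul_eq_zero.mp h0 with h | h
    · exact h
    · exact absurd h hnn
  rw [hzxy] at hc
  simp only [zero_smul, zero_add] at hc
  have := congrArg (fun u => (tripleProd n x y)⁻¹ • u) hc
  simp only [smul_smul, inv_mul_cancel₀ hq, one_smul, smul_add] at this
  exact ⟨_, _, this⟩

lemma stmt9_tp_ne3 (n x y : Fin 3 → ℝ) (hn : n ≠ 0) (hx : n ⬝ᵥ x = 0) (hy : n ⬝ᵥ y = 0)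
    (hind : ∀ c d : ℝ, c • x + d • y = 0 → c = 0 ∧ d = 0) :
    tripleProd n x y ≠ 0 := by
  intro hq
  have hdet : (Matrix.det ![n, x, y]) = 0 := by
    rw [← triple_product_eq_det]; exact hq
  obtain ⟨c, hc0, hcM⟩ := Matrix.exists_vecMul_eq_zero_iff.mpr hdet
  have hlin : c 0 • n + c 1 • x + c 2 • y = 0 := by
    funext j
    have := congrFun hcM j
    simpa [Matrix.vecMul, dotProduct, Fin.sum_univ_three, Pi.add_apply, Pi.smul_apply,
      smul_eq_mul] using this
  have hc00 : c 0 = 0 := by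
    have := congrArg (fun u => n ⬝ᵥ u) hlin
    simp only [dotProduct_add, dotProduct_smul, smul_eq_mul, hx, hy, dotProduct_zero] at this
    have hnn : n ⬝ᵥ n ≠ 0 := fun h => hn (dotProduct_self_eq_zero.mp h)
    rcases mul_eq_zero.mp (by linarith : c 0 * (n ⬝ᵥ n) = 0) with h | h
    · exact h
    · exact absurd h hnn
  rw [hc00, zero_smul, zero_add] at hlin
  obtain ⟨h1, h2⟩ := hind _ _ hlin
  apply hc0
  funext i
  fin_cases i <;> simp [hc00, h1, h2]

lemma stmt9_mem_line_iff (X Y P : Fin 3 → ℝ) :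
    P ∈ affineSpan ℝ ({X, Y} : Set (Fin 3 → ℝ)) ↔ ∃ r : ℝ, P = X + r • (Y - X) := by
  constructor
  · intro h
    have h2 : (P - X) +ᵥ X ∈ affineSpan ℝ ({X, Y} : Set (Fin 3 → ℝ)) := by
      simpa [vadd_eq_add, sub_add_cancel] using h
    obtain ⟨r, hr⟩ := (vadd_left_mem_affineSpan_pair).mp h2
    refine ⟨r, ?_⟩
    have : r • (Y - X) = P - X := by simpa [vsub_eq_sub] using hr
    rw [this]; abel
  · rintro ⟨r, rfl⟩
    have := (vadd_left_mem_affineSpan_pair (k := ℝ) (p₁ := X) (p₂ := Y)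
      (v := r • (Y - X))).mpr ⟨r, by simp [vsub_eq_sub]⟩
    simpa [vadd_eq_add, add_comm] using this

lemma stmt9_tp_span_zero (x p q : Fin 3 → ℝ)
    (h : x ∈ Submodule.span ℝ ({p, q} : Set (Fin 3 → ℝ))) : tripleProd x p q = 0 := by
  obtain ⟨m, n, rfl⟩ := Submodule.mem_span_pair.mp h
  simp only [stmt9_tripleProd_eq, Pi.add_apply, Pi.smul_apply, smul_eq_mul]
  ring

lemma stmt9_tp_smul (c : ℝ) (x p q : Fin 3 → ℝ) :
    tripleProd (c • x) p q = c * tripleProd x p q := by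
  simp only [stmt9_tripleProd_eq, Pi.smul_apply, smul_eq_mul]; ring

lemma stmt9_tp_left (c d : ℝ) (x y p q : Fin 3 → ℝ) :
    tripleProd (c • x + d • y) p q = c * tripleProd x p q + d * tripleProd y p q := by
  simp only [stmt9_tripleProd_eq, Pi.add_apply, Pi.smul_apply, smul_eq_mul]; ring

lemma stmt9_tp_lin23 (n x y : Fin 3 → ℝ) (c1 c2 d1 d2 : ℝ) :
    tripleProd n (c1 • x + c2 • y) (d1 • x + d2 • y)
      = (c1 * d2 - c2 * d1) * tripleProd n x y := by
  simp only [stmt9_tripleProd_eq, Pi.add_apply, Pi.smul_apply, smul_eq_mul]; ring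

lemma stmt9_tp_comb_left (n x y : Fin 3 → ℝ) (c1 c2 : ℝ) :
    tripleProd n (c1 • x + c2 • y) x = -(c2 * tripleProd n x y) := by
  simp only [stmt9_tripleProd_eq, Pi.add_apply, Pi.smul_apply, smul_eq_mul]; ring

lemma stmt9_tp_comb_right (n x y : Fin 3 → ℝ) (c1 c2 : ℝ) :
    tripleProd n y (c1 • x + c2 • y) = -(c1 * tripleProd n x y) := by
  simp only [stmt9_tripleProd_eq, Pi.add_apply, Pi.smul_apply, smul_eq_mul]; ring

lemma stmt9_tp_mid (n z x y : Fin 3 → ℝ) (c d : ℝ) :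
    tripleProd n (c • x + d • y) z = c * tripleProd n x z + d * tripleProd n y z := by
  simp only [stmt9_tripleProd_eq, Pi.add_apply, Pi.smul_apply, smul_eq_mul]; ring

theorem stmt9
    (A B v w : ZMod 4 → (Fin 3 → ℝ)) (t : ZMod 4 → ℝ)
    (a : ZMod 4 → (Fin 3 → ℝ)) (ha : ∀ i, a i = A (i + 1) - A i)
    -- all the points `Aᵢ`, `Bᵢ` lie in a common affine plane `π = {x | ⟨ν, x⟩ = d}`
    (ν : Fin 3 → ℝ) (d : ℝ) (hν : ν ≠ 0)
    (hAπ : ∀ i, ν ⬝ᵥ A i = d) (hBπ : ∀ i, ν ⬝ᵥ B i = d)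
    (hvw : ∀ i, LinearIndependent ℝ ![v i, w i])
    (hprev : ∀ i, tripleProd (a (i - 1)) (v i) (w i) ≠ 0)
    (hnext : ∀ i, tripleProd (a i) (v i) (w i) ≠ 0)
    (hBv0 : ∀ i, B (i - 1) - A i ≠ 0) (hBv1 : ∀ i, B i - A i ≠ 0)
    (hBs0 : ∀ i, B (i - 1) - A i ∈ Submodule.span ℝ ({v i, w i} : Set (Fin 3 → ℝ)))
    (hBs1 : ∀ i, B i - A i ∈ Submodule.span ℝ ({v i, w i} : Set (Fin 3 → ℝ)))
    (hBB : ∀ i, B (i - 1) ≠ B i)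
    (ht0 : ∀ i, t i ≠ 0) (ht1 : ∀ i, t i ≠ 1)
    (hAt : ∀ i, A i = t i • B (i - 1) + (1 - t i) • B i)
    -- additional general position assumptions
    (hA23 : A 2 ≠ A 3) (hA41 : A 4 ≠ A 1) (hB13 : B 1 ≠ B 3)
    (hlines_ne : affineSpan ℝ ({A 2, A 3} : Set (Fin 3 → ℝ)) ≠
      affineSpan ℝ ({A 4, A 1} : Set (Fin 3 → ℝ)))
    (hnp : ¬ AffineSubspace.Parallel
      (affineSpan ℝ ({A 2, A 3} : Set (Fin 3 → ℝ)))
      (affineSpan ℝ ({A 4, A 1} : Set (Fin 3 → ℝ)))) :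
    ∏ i : ZMod 4, tripleProd (a (i - 1)) (v i) (w i) / tripleProd (a i) (v i) (w i) = 1
    ↔ ∃ P : Fin 3 → ℝ,
        P ∈ affineSpan ℝ ({B 1, B 3} : Set (Fin 3 → ℝ)) ∧
        P ∈ affineSpan ℝ ({A 2, A 3} : Set (Fin 3 → ℝ)) ∧
        P ∈ affineSpan ℝ ({A 4, A 1} : Set (Fin 3 → ℝ)) := by
  -- the side vectors of the quadrilateral B₀B₁B₂B₃
  obtain ⟨bb, hbb⟩ : ∃ bb : ZMod 4 → (Fin 3 → ℝ), bb = fun i => B (i - 1) - B i := ⟨_, rfl⟩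
  have hbbi : ∀ i, bb i = B (i - 1) - B i := fun i => by rw [hbb]
  have hbne : ∀ i, bb i ≠ 0 := fun i => by rw [hbbi]; exact sub_ne_zero.mpr (hBB i)
  have hbν : ∀ i, ν ⬝ᵥ bb i = 0 := fun i => by
    rw [hbbi, dotProduct_sub, hBπ, hBπ, sub_self]
  have haν : ∀ i, ν ⬝ᵥ a i = 0 := fun i => by
    rw [ha, dotProduct_sub, hAπ, hAπ, sub_self]
  have h1t : ∀ i, (1 : ℝ) - t i ≠ 0 := fun i => sub_ne_zero.mpr fun h => ht1 i h.symm
  -- the plane of the i-th face contains bb i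
  have hbzero : ∀ i, tripleProd (bb i) (v i) (w i) = 0 := by
    intro i
    have hBA : B (i - 1) - A i = (1 - t i) • bb i := by
      rw [hAt i, hbbi]; module
    have h0 : tripleProd (B (i - 1) - A i) (v i) (w i) = 0 :=
      stmt9_tp_span_zero _ _ _ (hBs0 i)
    rw [hBA, stmt9_tp_smul] at h0
    rcases mul_eq_zero.mp h0 with h | h
    · exact absurd h (h1t i)
    · exact h
  -- expansion of the edge vectors a i
  have ha_exp : ∀ i, a i = (-(1 - t (i + 1))) • bb (i + 1) + (-(t i)) • bb i := by
    intro i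
    have e1 : (i + 1) - 1 = i := by ring
    rw [ha i, hAt (i + 1), hAt i, hbbi, hbbi, e1]
    module
  have hPrevEq : ∀ i, tripleProd (a (i - 1)) (v i) (w i)
      = (-(t (i - 1))) * tripleProd (bb (i - 1)) (v i) (w i) := by
    intro i
    have e1 : (i - 1) + 1 = i := by ring
    rw [ha_exp (i - 1), e1, stmt9_tp_left, hbzero i]
    ring
  have hNextEq : ∀ i, tripleProd (a i) (v i) (w i)
      = (-(1 - t (i + 1))) * tripleProd (bb (i + 1)) (v i) (w i) := by
    intro i
    rw [ha_exp i, stmt9_tp_left, hbzero i]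
    ring
  have hQne : ∀ i, tripleProd (bb (i + 1)) (v i) (w i) ≠ 0 := by
    intro i h
    exact hnext i (by rw [hNextEq i, h, mul_zero])
  have hPne : ∀ i, tripleProd (bb (i - 1)) (v i) (w i) ≠ 0 := by
    intro i h
    exact hprev i (by rw [hPrevEq i, h, mul_zero])
  have hind : ∀ i, ∀ c d : ℝ, c • bb i + d • bb (i + 1) = 0 → c = 0 ∧ d = 0 := by
    intro i c dd h
    have h0 : tripleProd (c • bb i + dd • bb (i + 1)) (v i) (w i) = 0 := by
      rw [h, show (0 : Fin 3 → ℝ) = (0 : ℝ) • bb i from (zero_smul ℝ _).symm, stmt9_tp_smul,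
        zero_mul]
    rw [stmt9_tp_left, hbzero i, mul_zero, zero_add] at h0
    have hd : dd = 0 := by
      rcases mul_eq_zero.mp h0 with h' | h'
      · exact h'
      · exact absurd h' (hQne i)
    refine ⟨?_, hd⟩
    rw [hd, zero_smul, add_zero] at h
    rcases smul_eq_zero.mp h with h' | h'
    · exact h'
    · exact absurd h' (hbne i)
  have hg : ∀ i, tripleProd ν (bb i) (bb (i + 1)) ≠ 0 := fun i =>
    stmt9_tp_ne3 ν _ _ hν (hbν i) (hbν _) (hind i)
  -- key proportionality
  have key : ∀ i, tripleProd (bb (i - 1)) (v i) (w i) * tripleProd ν (bb i) (bb (i + 1))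
      = -(tripleProd (bb (i + 1)) (v i) (w i) * tripleProd ν (bb (i - 1)) (bb i)) := by
    intro i
    obtain ⟨c, dd, hcd⟩ := stmt9_decomp3 ν (bb i) (bb (i + 1)) (bb (i - 1)) hν (hg i)
      (hbν i) (hbν _) (hbν _)
    have h1 : tripleProd (bb (i - 1)) (v i) (w i)
        = dd * tripleProd (bb (i + 1)) (v i) (w i) := by
      rw [hcd, stmt9_tp_left, hbzero i]; ring
    have h2 : tripleProd ν (bb (i - 1)) (bb i)
        = -(dd * tripleProd ν (bb i) (bb (i + 1))) := by
      rw [hcd, stmt9_tp_mid]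
      have hxx : tripleProd ν (bb i) (bb i) = 0 := by
        rw [stmt9_tripleProd_eq]; ring
      have hswap : tripleProd ν (bb (i + 1)) (bb i)
          = -tripleProd ν (bb i) (bb (i + 1)) := by
        rw [stmt9_tripleProd_eq, stmt9_tripleProd_eq]; ring
      rw [hxx, hswap]; ring
    rw [h1, h2]; ring
  -- the ratio of triple products for each face
  have ratio : ∀ i, tripleProd (a (i - 1)) (v i) (w i) / tripleProd (a i) (v i) (w i)
      = (-(t (i - 1)) * tripleProd ν (bb (i - 1)) (bb i))
        / ((1 - t (i + 1)) * tripleProd ν (bb i) (bb (i + 1))) := by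
    intro i
    rw [div_eq_div_iff (hnext i) (mul_ne_zero (h1t (i + 1)) (hg i))]
    rw [hPrevEq i, hNextEq i]
    linear_combination (-(t (i - 1)) * (1 - t (i + 1))) * key i
  -- compute the product χ
  have hprod : (∏ i : ZMod 4,
      tripleProd (a (i - 1)) (v i) (w i) / tripleProd (a i) (v i) (w i))
      = (t 0 * t 1 * t 2 * t 3) / ((1 - t 0) * (1 - t 1) * (1 - t 2) * (1 - t 3)) := by
    have h4 : (∏ i : ZMod 4,
        tripleProd (a (i - 1)) (v i) (w i) / tripleProd (a i) (v i) (w i))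
        = (tripleProd (a ((0:ZMod 4) - 1)) (v 0) (w 0) / tripleProd (a 0) (v 0) (w 0))
          * (tripleProd (a ((1:ZMod 4) - 1)) (v 1) (w 1) / tripleProd (a 1) (v 1) (w 1))
          * (tripleProd (a ((2:ZMod 4) - 1)) (v 2) (w 2) / tripleProd (a 2) (v 2) (w 2))
          * (tripleProd (a ((3:ZMod 4) - 1)) (v 3) (w 3) / tripleProd (a 3) (v 3) (w 3)) :=
      Fin.prod_univ_four _
    rw [h4]
    rw [ratio 0, ratio 1, ratio 2, ratio 3]
    rw [show (0 : ZMod 4) - 1 = 3 from by decide, show (0 : ZMod 4) + 1 = 1 from by decide,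
      show (1 : ZMod 4) - 1 = 0 from by decide, show (1 : ZMod 4) + 1 = 2 from by decide,
      show (2 : ZMod 4) - 1 = 1 from by decide, show (2 : ZMod 4) + 1 = 3 from by decide,
      show (3 : ZMod 4) - 1 = 2 from by decide, show (3 : ZMod 4) + 1 = 0 from by decide]
    have g0 : tripleProd ν (bb 0) (bb 1) ≠ 0 := by
      have h := hg 0; rwa [show (0 : ZMod 4) + 1 = 1 from by decide] at h
    have g1 : tripleProd ν (bb 1) (bb 2) ≠ 0 := by
      have h := hg 1; rwa [show (1 : ZMod 4) + 1 = 2 from by decide] at h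
    have g2 : tripleProd ν (bb 2) (bb 3) ≠ 0 := by
      have h := hg 2; rwa [show (2 : ZMod 4) + 1 = 3 from by decide] at h
    have g3 : tripleProd ν (bb 3) (bb 0) ≠ 0 := by
      have h := hg 3; rwa [show (3 : ZMod 4) + 1 = 0 from by decide] at h
    rw [div_mul_div_comm, div_mul_div_comm, div_mul_div_comm]
    rw [div_eq_div_iff
      (mul_ne_zero (mul_ne_zero (mul_ne_zero
        (mul_ne_zero (h1t 1) g0) (mul_ne_zero (h1t 2) g1))
        (mul_ne_zero (h1t 3) g2)) (mul_ne_zero (h1t 0) g3))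
      (mul_ne_zero (mul_ne_zero (mul_ne_zero (h1t 0) (h1t 1)) (h1t 2)) (h1t 3))]
    ring
  -- index arithmetic in `ZMod 4`
  have e01 : (0 : ZMod 4) - 1 = 3 := by decide
  have e11 : (1 : ZMod 4) - 1 = 0 := by decide
  have e21 : (2 : ZMod 4) - 1 = 1 := by decide
  have e31 : (3 : ZMod 4) - 1 = 2 := by decide
  have hA4eq : A 4 = A 0 := rfl
  -- coordinates in the plane, with origin B 2 and basis bb 2 = B 1 - B 2, bb 3 = B 2 - B 3
  have hq : tripleProd ν (bb 2) (bb 3) ≠ 0 := by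
    have h := hg 2; rwa [show (2 : ZMod 4) + 1 = 3 from by decide] at h
  obtain ⟨α, β, hb1c⟩ := stmt9_decomp3 ν (bb 2) (bb 3) (bb 1) hν hq (hbν 2) (hbν 3) (hbν 1)
  have hb0c : bb 0 = (-(1 + α)) • bb 2 + (-(1 + β)) • bb 3 := by
    have hsum : bb 0 = -bb 1 - bb 2 - bb 3 := by
      rw [hbbi 0, hbbi 1, hbbi 2, hbbi 3, e01, e11, e21, e31]; module
    rw [hsum, hb1c]; module
  have hcoord : ∀ c dd : ℝ, c • bb 2 + dd • bb 3 = 0 → c = 0 ∧ dd = 0 := by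
    intro c dd h
    refine hind 2 c dd ?_
    rwa [show (2 : ZMod 4) + 1 = 3 from by decide]
  -- nondegeneracy of the coordinates of the quadrilateral
  have hβ : β ≠ 0 := by
    have h := hg 1
    rw [show (1 : ZMod 4) + 1 = 2 from by decide] at h
    intro hb0
    apply h
    rw [hb1c, stmt9_tp_comb_left, hb0]
    ring
  have hα : (1 : ℝ) + α ≠ 0 := by
    have h := hg 3
    rw [show (3 : ZMod 4) + 1 = 0 from by decide] at h
    intro ha0
    apply h
    rw [hb0c, stmt9_tp_comb_right, ha0]
    ring
  have hab : α - β ≠ 0 := by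
    have h := hg 0
    rw [show (0 : ZMod 4) + 1 = 1 from by decide] at h
    intro hab0
    apply h
    rw [hb0c, hb1c, stmt9_tp_lin23,
      show (-(1 + α)) * β - (-(1 + β)) * α = α - β by ring, hab0]
    ring
  -- the scalar coordinates of the points
  obtain ⟨x1, hx1⟩ : ∃ x : ℝ, x = 1 + t 1 * α := ⟨_, rfl⟩
  obtain ⟨y1, hy1⟩ : ∃ x : ℝ, x = t 1 * β := ⟨_, rfl⟩
  obtain ⟨x4, hx4⟩ : ∃ x : ℝ, x = (1 - t 0) * (1 + α) := ⟨_, rfl⟩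
  obtain ⟨y4, hy4⟩ : ∃ x : ℝ, x = -(t 0) + (1 - t 0) * β := ⟨_, rfl⟩
  obtain ⟨detv, hdetv⟩ : ∃ x : ℝ, x = t 2 * (y1 - y4) + (t 3 - 1) * (x1 - x4) := ⟨_, rfl⟩
  obtain ⟨Mv, hMv⟩ : ∃ x : ℝ, x = t 2 * (y1 - y4) - x4 * (y1 - y4) + (x1 - x4) * y4 := ⟨_, rfl⟩
  obtain ⟨Ev, hEv⟩ : ∃ x : ℝ,
    x = t 1 * t 2 * t 3 * t 0 - (1 - t 1) * (1 - t 2) * (1 - t 3) * (1 - t 0) := ⟨_, rfl⟩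
  -- coordinates of the points
  have hB1c : B 1 = B 2 + (1 : ℝ) • bb 2 + (0 : ℝ) • bb 3 := by
    rw [hbbi 2, e21]; module
  have hB3c : B 3 = B 2 + (0 : ℝ) • bb 2 + (-1 : ℝ) • bb 3 := by
    rw [hbbi 3, e31]; module
  have hB0c : B 0 = B 2 + (1 + α) • bb 2 + β • bb 3 := by
    have h0 : B 0 = bb 1 + B 1 := by rw [hbbi 1, e11]; module
    rw [h0, hb1c, hB1c]; module
  have hA2c : A 2 = B 2 + (t 2) • bb 2 + (0 : ℝ) • bb 3 := by
    rw [hAt 2, e21, hB1c]; module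
  have hA3c : A 3 = B 2 + (0 : ℝ) • bb 2 + (t 3 - 1) • bb 3 := by
    rw [hAt 3, e31, hB3c]; module
  have hA0c : A 0 = B 2 + x4 • bb 2 + y4 • bb 3 := by
    rw [hx4, hy4, hAt 0, e01, hB3c, hB0c]; module
  have hA1c : A 1 = B 2 + x1 • bb 2 + y1 • bb 3 := by
    rw [hx1, hy1, hAt 1, e11, hB0c, hB1c]; module
  -- the lines A₂A₃ and A₄A₁ are not parallel, in coordinates
  have hdet : detv ≠ 0 := by
    intro hd0
    apply hnp
    rw [AffineSubspace.affineSpan_pair_parallel_iff_vectorSpan_eq]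
    have hk2 : A 1 - A 4 = ((x1 - x4) / (-(t 2))) • (A 3 - A 2) := by
      rw [hA4eq, hA0c, hA1c, hA2c, hA3c]
      have ht2 := ht0 2
      rw [hdetv] at hd0
      match_scalars
      · field_simp [ht2]
        ring
      · field_simp [ht2]
        ring
      · field_simp [ht2]
        linear_combination hd0
    have hk0 : (x1 - x4) / (-(t 2)) ≠ 0 := by
      intro h
      rw [h, zero_smul, sub_eq_zero] at hk2
      exact hA41 hk2.symm
    rw [vectorSpan_pair, vectorSpan_pair]
    have hv1 : A 2 -ᵥ A 3 = (-1 : ℝ) • (A 3 - A 2) := by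
      rw [vsub_eq_sub, neg_one_smul, neg_sub]
    have hv2 : A 4 -ᵥ A 1 = (-(((x1 - x4) / (-(t 2))))) • (A 3 - A 2) := by
      rw [vsub_eq_sub, ← neg_sub (A 1) (A 4), hk2, neg_smul]
    rw [hv1, hv2,
      Submodule.span_singleton_smul_eq (IsUnit.mk0 (-1 : ℝ) (by norm_num)) _,
      Submodule.span_singleton_smul_eq (IsUnit.mk0 _ (neg_ne_zero.mpr hk0)) _]
  -- the purely polynomial identity relating everything
  have hpoly : t 2 * detv - (t 2 + t 3 - 1) * Mv - detv = (α - β) * Ev := by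
    rw [hdetv, hMv, hx1, hy1, hx4, hy4, hEv]; ring
  -- now rewrite the goal
  have hS : ((1 : ℝ) - t 0) * (1 - t 1) * (1 - t 2) * (1 - t 3) ≠ 0 :=
    mul_ne_zero (mul_ne_zero (mul_ne_zero (h1t 0) (h1t 1)) (h1t 2)) (h1t 3)
  rw [hprod, div_eq_one_iff_eq hS]
  constructor
  · -- flexibility implies concurrency
    intro hTS
    have hE0 : Ev = 0 := by rw [hEv]; linear_combination hTS
    obtain ⟨μ, hμ⟩ : ∃ x : ℝ, x = Mv / detv := ⟨_, rfl⟩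
    obtain ⟨σ, hσ⟩ : ∃ x : ℝ, x = ((-(t 2)) * y4 - (t 3 - 1) * (x4 - t 2)) / detv := ⟨_, rfl⟩
    have hμdet : μ * detv = Mv := by
      rw [hμ]; field_simp
    have hσdet : σ * detv = (-(t 2)) * y4 - (t 3 - 1) * (x4 - t 2) := by
      rw [hσ]; field_simp
    have heq1 : t 2 * (1 - μ) = x4 + σ * (x1 - x4) := by
      have h5 : (t 2 * (1 - μ) - (x4 + σ * (x1 - x4))) * detv = 0 := by
        rw [hdetv] at hμdet hσdet ⊢
        rw [hMv] at hμdet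
        linear_combination (-(t 2)) * hμdet - (x1 - x4) * hσdet
      rcases mul_eq_zero.mp h5 with h | h
      · linarith
      · exact absurd h hdet
    have heq2 : (t 3 - 1) * μ = y4 + σ * (y1 - y4) := by
      have h5 : ((t 3 - 1) * μ - (y4 + σ * (y1 - y4))) * detv = 0 := by
        rw [hdetv] at hμdet hσdet ⊢
        rw [hMv] at hμdet
        linear_combination (t 3 - 1) * hμdet - (y1 - y4) * hσdet
      rcases mul_eq_zero.mp h5 with h | h
      · linarith
      · exact absurd h hdet
    have heq3 : t 2 * (1 - μ) - (t 3 - 1) * μ = 1 := by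
      have h5 : (t 2 * (1 - μ) - (t 3 - 1) * μ - 1) * detv = 0 := by
        linear_combination (-(t 2 + t 3 - 1)) * hμdet + hpoly + (α - β) * hE0
      rcases mul_eq_zero.mp h5 with h | h
      · linarith
      · exact absurd h hdet
    refine ⟨B 2 + (t 2 * (1 - μ)) • bb 2 + ((t 3 - 1) * μ) • bb 3, ?_, ?_, ?_⟩
    · rw [stmt9_mem_line_iff]
      refine ⟨-((t 3 - 1) * μ), ?_⟩
      rw [hB1c, hB3c]
      match_scalars <;> linarith [heq1, heq2, heq3]
    · rw [stmt9_mem_line_iff]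
      refine ⟨μ, ?_⟩
      rw [hA2c, hA3c]
      match_scalars <;> linarith [heq1, heq2, heq3]
    · rw [stmt9_mem_line_iff]
      refine ⟨σ, ?_⟩
      rw [hA4eq, hA0c, hA1c]
      match_scalars <;> linarith [heq1, heq2, heq3]
  · -- concurrency implies flexibility
    rintro ⟨P, hP1, hP2, hP3⟩
    rw [stmt9_mem_line_iff] at hP1 hP2 hP3
    obtain ⟨r1, hP1⟩ := hP1
    obtain ⟨r2, hP2⟩ := hP2
    obtain ⟨r3, hP3⟩ := hP3
    rw [hA4eq] at hP3
    have h12 := hP1.symm.trans hP2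
    have h13 := hP1.symm.trans hP3
    have hs12 : ((1 - r1) - t 2 * (1 - r2)) • bb 2 + ((-r1) - (t 3 - 1) * r2) • bb 3 = 0 := by
      have hx : ((1 - r1) - t 2 * (1 - r2)) • bb 2 + ((-r1) - (t 3 - 1) * r2) • bb 3
          = (B 1 + r1 • (B 3 - B 1)) - (A 2 + r2 • (A 3 - A 2)) := by
        rw [hB1c, hB3c, hA2c, hA3c]; module
      rw [hx]
      exact sub_eq_zero_of_eq h12
    have hs34 : ((1 - r1) - (x4 + r3 * (x1 - x4))) • bb 2
        + ((-r1) - (y4 + r3 * (y1 - y4))) • bb 3 = 0 := by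
      have hx : ((1 - r1) - (x4 + r3 * (x1 - x4))) • bb 2
          + ((-r1) - (y4 + r3 * (y1 - y4))) • bb 3
          = (B 1 + r1 • (B 3 - B 1)) - (A 0 + r3 • (A 1 - A 0)) := by
        rw [hB1c, hB3c, hA0c, hA1c]; module
      rw [hx]
      exact sub_eq_zero_of_eq h13
    obtain ⟨s1, s2⟩ := hcoord _ _ hs12
    obtain ⟨s3, s4⟩ := hcoord _ _ hs34
    have h3 : t 2 * (1 - r2) - (t 3 - 1) * r2 = 1 := by linear_combination -s1 + s2
    have hMr : r2 * detv = Mv := by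
      rw [hdetv, hMv]
      linear_combination (-(y1 - y4)) * s3 + (y1 - y4) * s1 + (x1 - x4) * s4 - (x1 - x4) * s2
    have hEab : (α - β) * Ev = 0 := by
      linear_combination (-1 : ℝ) * hpoly + detv * h3 + (t 2 + t 3 - 1) * hMr
    have hE0 : Ev = 0 := by
      rcases mul_eq_zero.mp hEab with h | h
      · exact absurd h hab
      · exact h
    rw [hEv] at hE0
    linear_combination hE0
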